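/- Let σ>0 and let α, β : [0,1] → ℝ be continuously differentiable with β(0)=0, β(1)=1 and α(t) ≠ 0 for all t ∈ [0,1). Define c(t) := β(t)σ²/(α(t)²+β(t)²σ²). Then M(t) := β(t) is the unique solution on [0,1) of the linear ODE M'(t) = ( β'(t)c(t) + (α'(t)/α(t))·(1−c(t)β(t)) )·M(t) + ( β'(t) − (α'(t)/α(t))·β(t) )·α(t)²/(α(t)²+β(t)²σ²) with initial condition M(0)=0; in particular M(t) → 1 as t → 1. -/

import Mathlib

open Set

/-- `M(t) = β(t)` is the unique solution of the exact-flow summary-statistic ODE with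
`M(0) = 0`, and `M(t) → 1` as `t → 1⁻`. -/
theorem stmt_7 (σ : ℝ) (hσ : 0 < σ) (α β α' β' : ℝ → ℝ)
    (hα : ∀ t ∈ Set.Icc (0 : ℝ) 1, HasDerivAt α (α' t) t)
    (hβ : ∀ t ∈ Set.Icc (0 : ℝ) 1, HasDerivAt β (β' t) t)
    (hα' : ContinuousOn α' (Set.Icc 0 1)) (hβ' : ContinuousOn β' (Set.Icc 0 1))
    (hβ0 : β 0 = 0) (hβ1 : β 1 = 1)
    (hαne : ∀ t ∈ Set.Ico (0 : ℝ) 1, α t ≠ 0)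
    (c : ℝ → ℝ) (hc : c = fun t => β t * σ ^ 2 / (α t ^ 2 + β t ^ 2 * σ ^ 2)) :
    (∀ t ∈ Set.Ico (0 : ℝ) 1,
      HasDerivAt β
        ((β' t * c t + α' t / α t * (1 - c t * β t)) * β t +
          (β' t - α' t / α t * β t) * (α t ^ 2 / (α t ^ 2 + β t ^ 2 * σ ^ 2))) t) ∧
    (∀ N : ℝ → ℝ, N 0 = 0 →
      (∀ t ∈ Set.Ico (0 : ℝ) 1,
        HasDerivAt N
          ((β' t * c t + α' t / α t * (1 - c t * β t)) * N t +
            (β' t - α' t / α t * β t) * (α t ^ 2 / (α t ^ 2 + β t ^ 2 * σ ^ 2))) t) →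
      ∀ t ∈ Set.Ico (0 : ℝ) 1, N t = β t) ∧
    Filter.Tendsto β (nhdsWithin 1 (Set.Iio 1)) (nhds 1) := by
  subst hc
  have hIcoIcc : Set.Ico (0:ℝ) 1 ⊆ Set.Icc (0:ℝ) 1 := Set.Ico_subset_Icc_self
  have hD : ∀ t ∈ Set.Ico (0:ℝ) 1, α t ^ 2 + β t ^ 2 * σ ^ 2 ≠ 0 := by
    intro t ht
    nlinarith [sq_nonneg (β t * σ), pow_two_pos_of_ne_zero (hαne t ht)]
  have hβode : ∀ t ∈ Set.Ico (0:ℝ) 1,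
      (β' t * (β t * σ ^ 2 / (α t ^ 2 + β t ^ 2 * σ ^ 2)) +
        α' t / α t * (1 - β t * σ ^ 2 / (α t ^ 2 + β t ^ 2 * σ ^ 2) * β t)) * β t +
        (β' t - α' t / α t * β t) * (α t ^ 2 / (α t ^ 2 + β t ^ 2 * σ ^ 2)) = β' t := by
    intro t ht
    have hDt := hD t ht
    have hαt := hαne t ht
    field_simp
    ring
  refine ⟨fun t ht => ?_, ?_, ?_⟩
  · have h := hβ t (hIcoIcc ht)
    convert h using 1
    simpa using hβode t ht
  · -- uniqueness
    intro N hN0 hNode t ht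
    obtain ⟨ht0, ht1⟩ := ht
    set f : ℝ → ℝ := fun s =>
      β' s * (β s * σ ^ 2 / (α s ^ 2 + β s ^ 2 * σ ^ 2)) +
        α' s / α s * (1 - β s * σ ^ 2 / (α s ^ 2 + β s ^ 2 * σ ^ 2) * β s) with hf
    have hsub : Set.Icc 0 t ⊆ Set.Ico (0:ℝ) 1 := fun s hs => ⟨hs.1, lt_of_le_of_lt hs.2 ht1⟩
    have hsub' : Set.Icc 0 t ⊆ Set.Icc (0:ℝ) 1 := hsub.trans hIcoIcc
    -- continuity of f on Icc 0 t
    have cα : ContinuousOn α (Set.Icc 0 t) := fun s hs =>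
      (hα s (hsub' hs)).continuousAt.continuousWithinAt
    have cβ : ContinuousOn β (Set.Icc 0 t) := fun s hs =>
      (hβ s (hsub' hs)).continuousAt.continuousWithinAt
    have hDne : ∀ s ∈ Set.Icc (0:ℝ) t, α s ^ 2 + β s ^ 2 * σ ^ 2 ≠ 0 :=
      fun s hs => hD s (hsub hs)
    have hαne' : ∀ s ∈ Set.Icc (0:ℝ) t, α s ≠ 0 := fun s hs => hαne s (hsub hs)
    have cDen : ContinuousOn (fun s => α s ^ 2 + β s ^ 2 * σ ^ 2) (Set.Icc 0 t) :=
      ((cα.pow 2).add ((cβ.pow 2).mul continuousOn_const))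
    have cf : ContinuousOn f (Set.Icc 0 t) := by
      apply ContinuousOn.add
      · exact (hβ'.mono hsub').mul (((cβ.mul continuousOn_const).div cDen hDne))
      · exact ((hα'.mono hsub').div cα hαne').mul
          (continuousOn_const.sub (((cβ.mul continuousOn_const).div cDen hDne).mul cβ))
    obtain ⟨K, hK⟩ := IsCompact.exists_bound_of_continuousOn isCompact_Icc cf
    set g : ℝ → ℝ := fun s => N s - β s with hg
    have hg0 : g 0 = 0 := by simp [hg, hN0, hβ0]
    have hgd : ∀ s ∈ Set.Ico (0:ℝ) t, HasDerivWithinAt g (f s * g s) (Set.Ici s) s := by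
      intro s hs
      have hs' : s ∈ Set.Ico (0:ℝ) 1 := ⟨hs.1, hs.2.trans ht1⟩
      have h1 := (hNode s hs').sub (hβ s (hIcoIcc hs'))
      have h1' := h1.hasDerivWithinAt (s := Set.Ici s)
      refine HasDerivWithinAt.congr_deriv h1' ?_
      simp only [hf, hg]
      linear_combination hβode s hs'
    have hgc : ContinuousOn g (Set.Icc 0 t) := by
      intro s hs
      exact (((hNode s (hsub hs)).sub (hβ s (hsub' hs))).continuousAt).continuousWithinAt
    have hbound : ∀ s ∈ Set.Ico (0:ℝ) t, ‖f s * g s‖ ≤ K * ‖g s‖ + 0 := by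
      intro s hs
      rw [norm_mul, add_zero]
      exact mul_le_mul_of_nonneg_right (hK s ⟨hs.1, hs.2.le⟩) (norm_nonneg _)
    have := norm_le_gronwallBound_of_norm_deriv_right_le (δ := 0) (K := K) (ε := 0)
      hgc hgd (by simp [hg0]) hbound t ⟨ht0, le_refl t⟩
    rw [gronwallBound_ε0_δ0] at this
    have : g t = 0 := norm_le_zero_iff.mp this
    have := sub_eq_zero.mp this
    simpa [hg] using this
  · -- limit as t → 1⁻
    have h1 : ContinuousAt β 1 := (hβ 1 (by norm_num)).continuousAt
    have := h1.continuousWithinAt (s := Set.Iio 1)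
    rw [ContinuousWithinAt, hβ1] at this
    exact this
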